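/- Let s : ℕ → Fin (G+1), G ≥ 1, be β-bounded-repetition fair for all values k ∈ {1,...,G} (each k appears within the first β positions and recurs with gap at most β). Then for every k ∈ {1,...,G}, limsup_{n→∞} |{m < n : s(m) = k}| / n ≤ 1 − (G−1)/β. -/

import Mathlib

open Filter Finset Topology

/-- Counting lemma: a value that appears before `β` and recurs with gap at most `β`
appears at least `n / β` times among the first `n` positions. -/
lemma stmt3_count_lb {α : Type*} [DecidableEq α] (β : ℕ) (s : ℕ → α) (j : α)
    (m0 : ℕ) (hm0 : m0 < β) (hs0 : s m0 = j)
    (hrec : ∀ m₁, s m₁ = j → ∃ m₂, m₁ < m₂ ∧ m₂ ≤ m₁ + β ∧ s m₂ = j) (n : ℕ) :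
    n / β ≤ ((Finset.range n).filter (fun m => s m = j)).card := by
  choose next hlt hle hval using hrec
  set occ : ℕ → {m : ℕ // s m = j} :=
    fun t => Nat.rec ⟨m0, hs0⟩ (fun _ p => ⟨next p.1 p.2, hval p.1 p.2⟩) t with hocc
  have hstep : ∀ t, (occ t).1 < (occ (t + 1)).1 := fun t => hlt _ _
  have hmono : StrictMono (fun t => (occ t).1) := strictMono_nat_of_lt_succ hstep
  have hb : ∀ t, (occ t).1 < (t + 1) * β := by
    intro t
    induction t with
    | zero => show m0 < (0 + 1) * β; simpa using hm0
    | succ t ih =>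
      have h1 : (occ (t + 1)).1 ≤ (occ t).1 + β := hle _ _
      have : (occ t).1 + β < (t + 1) * β + β := by omega
      calc (occ (t + 1)).1 ≤ (occ t).1 + β := h1
        _ < (t + 1) * β + β := this
        _ = (t + 1 + 1) * β := by ring
  have hmap : ∀ i ∈ Finset.range (n / β),
      (occ i).1 ∈ (Finset.range n).filter (fun m => s m = j) := by
    intro i hi
    rw [Finset.mem_range] at hi
    rw [Finset.mem_filter, Finset.mem_range]
    refine ⟨?_, (occ i).2⟩
    have h1 : (occ i).1 < (i + 1) * β := hb i
    have h2 : (i + 1) * β ≤ (n / β) * β := Nat.mul_le_mul_right _ (by omega)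
    have h3 : (n / β) * β ≤ n := Nat.div_mul_le_self n β
    omega
  have hinj : Set.InjOn (fun i => (occ i).1) (Finset.range (n / β)) :=
    fun a _ b _ h => hmono.injective h
  have := Finset.card_le_card_of_injOn _ hmap hinj
  simpa using this

theorem stmt_3 (G β : ℕ) (hG : 1 ≤ G)
    (s : ℕ → Fin (G + 1))
    (hfair : ∀ k : Fin (G + 1), k ≠ 0 →
      (∃ m < β, s m = k) ∧
      (∀ m₁, s m₁ = k → ∃ m₂, m₁ < m₂ ∧ m₂ ≤ m₁ + β ∧ s m₂ = k)) :
    ∀ k : Fin (G + 1), k ≠ 0 →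
      Filter.limsup
        (fun n : ℕ => (((Finset.range n).filter (fun m => s m = k)).card : ℝ) / n)
        Filter.atTop ≤ 1 - ((G : ℝ) - 1) / (β : ℝ) := by
  intro k hk
  obtain ⟨⟨m0k, hm0k, _⟩, _⟩ := hfair k hk
  have hβ : 1 ≤ β := by omega
  -- the other nonzero values
  set S : Finset (Fin (G + 1)) := (Finset.univ.erase 0).erase k with hS
  have hScard : S.card = G - 1 := by
    rw [hS, Finset.card_erase_of_mem, Finset.card_erase_of_mem] <;>
      simp [Finset.mem_erase, hk]
  -- key counting bound
  have key : ∀ n, ((Finset.range n).filter (fun m => s m = k)).card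
      + (G - 1) * (n / β) ≤ n := by
    intro n
    have hpart : (Finset.range n).card =
        ∑ j : Fin (G + 1), ((Finset.range n).filter (fun m => s m = j)).card :=
      Finset.card_eq_sum_card_fiberwise (fun x _ => Finset.mem_univ (s x))
    have hkS : k ∉ S := by simp [hS]
    have hsub : insert k S ⊆ Finset.univ := Finset.subset_univ _
    have hsum_le : ∑ j ∈ insert k S, ((Finset.range n).filter (fun m => s m = j)).card
        ≤ n := by
      calc ∑ j ∈ insert k S, ((Finset.range n).filter (fun m => s m = j)).card
          ≤ ∑ j : Fin (G + 1), ((Finset.range n).filter (fun m => s m = j)).card :=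
            Finset.sum_le_sum_of_subset hsub
        _ = (Finset.range n).card := hpart.symm
        _ = n := Finset.card_range n
    rw [Finset.sum_insert hkS] at hsum_le
    have hlow : (G - 1) * (n / β) ≤
        ∑ j ∈ S, ((Finset.range n).filter (fun m => s m = j)).card := by
      rw [← hScard]
      refine Finset.card_nsmul_le_sum S _ _ ?_
      intro j hj
      have hj0 : j ≠ 0 := by
        rw [hS] at hj
        exact (Finset.mem_erase.mp (Finset.mem_erase.mp hj).2).1
      obtain ⟨⟨m0, hm0, hs0⟩, hrec⟩ := hfair j hj0
      exact stmt3_count_lb β s j m0 hm0 hs0 hrec n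
    omega
  -- real-valued eventual bound
  set L : ℝ := 1 - ((G : ℝ) - 1) / (β : ℝ) with hL
  have hev : ∀ᶠ n in atTop,
      (((Finset.range n).filter (fun m => s m = k)).card : ℝ) / n
        ≤ L + ((G : ℝ) - 1) / n := by
    filter_upwards [eventually_ge_atTop 1] with n hn
    have hN : (0 : ℝ) < (n : ℝ) := by exact_mod_cast hn
    have hB : (0 : ℝ) < (β : ℝ) := by exact_mod_cast hβ
    have hkey := key n
    have hkeyR : (((Finset.range n).filter (fun m => s m = k)).card : ℝ)
        + ((G : ℝ) - 1) * ((n / β : ℕ) : ℝ) ≤ (n : ℝ) := by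
      have : ((G - 1 : ℕ) : ℝ) = (G : ℝ) - 1 := by
        have := hG; push_cast [Nat.cast_sub hG]; ring
      calc (((Finset.range n).filter (fun m => s m = k)).card : ℝ)
            + ((G : ℝ) - 1) * ((n / β : ℕ) : ℝ)
          = ((((Finset.range n).filter (fun m => s m = k)).card
              + (G - 1) * (n / β) : ℕ) : ℝ) := by push_cast [this]; ring
        _ ≤ (n : ℝ) := by exact_mod_cast hkey
    have hdiv : (n : ℝ) / (β : ℝ) - 1 ≤ ((n / β : ℕ) : ℝ) := by
      have hmod : n % β < β := Nat.mod_lt _ (by omega)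
      have heq : β * (n / β) + n % β = n := Nat.div_add_mod n β
      have heqR : (β : ℝ) * ((n / β : ℕ) : ℝ) + ((n % β : ℕ) : ℝ) = (n : ℝ) := by
        exact_mod_cast heq
      have hmodR : ((n % β : ℕ) : ℝ) ≤ (β : ℝ) := by exact_mod_cast hmod.le
      rw [sub_le_iff_le_add, div_le_iff₀ hB]
      nlinarith
    have hG1 : (0 : ℝ) ≤ (G : ℝ) - 1 := by
      have : (1 : ℝ) ≤ (G : ℝ) := by exact_mod_cast hG
      linarith
    have hC0 : (0 : ℝ) ≤ (((Finset.range n).filter (fun m => s m = k)).card : ℝ) :=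
      Nat.cast_nonneg _
    rw [div_le_iff₀ hN, hL]
    have hmul : ((G : ℝ) - 1) * ((n : ℝ) / (β : ℝ) - 1)
        ≤ ((G : ℝ) - 1) * ((n / β : ℕ) : ℝ) := by
      exact mul_le_mul_of_nonneg_left hdiv hG1
    have hfield : ((G : ℝ) - 1) * ((n : ℝ) / (β : ℝ))
        = ((G : ℝ) - 1) / (β : ℝ) * (n : ℝ) := by ring
    have : (1 - ((G : ℝ) - 1) / (β : ℝ) + ((G : ℝ) - 1) / (n : ℝ)) * (n : ℝ)
        = (n : ℝ) - ((G : ℝ) - 1) / (β : ℝ) * (n : ℝ) + ((G : ℝ) - 1) := by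
      field_simp
    rw [this, ← hfield]
    nlinarith
  -- limsup argument
  have htend : Tendsto (fun n : ℕ => L + ((G : ℝ) - 1) / n) atTop (𝓝 L) := by
    have h0 : Tendsto (fun n : ℕ => ((G : ℝ) - 1) / n) atTop (𝓝 0) :=
      tendsto_const_div_atTop_nhds_zero_nat _
    simpa using tendsto_const_nhds.add h0
  have hcob : IsCoboundedUnder (· ≤ ·)  atTop
      (fun n : ℕ => (((Finset.range n).filter (fun m => s m = k)).card : ℝ) / n) := by
    refine IsBoundedUnder.isCoboundedUnder_flip (isBoundedUnder_of ⟨0, fun n => ?_⟩)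
    show (0 : ℝ) ≤ (((Finset.range n).filter (fun m => s m = k)).card : ℝ) / n
    positivity
  have hbdd : IsBoundedUnder (· ≤ ·) atTop (fun n : ℕ => L + ((G : ℝ) - 1) / n) :=
    htend.isBoundedUnder_le
  calc Filter.limsup
        (fun n : ℕ => (((Finset.range n).filter (fun m => s m = k)).card : ℝ) / n)
        Filter.atTop
      ≤ Filter.limsup (fun n : ℕ => L + ((G : ℝ) - 1) / n) atTop :=
        Filter.limsup_le_limsup hev hcob hbdd
    _ = L := htend.limsup_eq
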